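/- Suppose h_k, h ∈ C_b(S) (continuous bounded functions on a metric space S) with h_k → h uniformly on a set B ⊆ S, sup_k ‖h_k‖_∞ ≤ M, ‖h‖_∞ ≤ M, and let X be an S-valued random variable with P(X ∉ B) ≤ e^{-3M/ε} for some ε ∈ (0,1). If sup_{x∈B}|h_k(x) - h(x)| ≤ η with 0 < η < M, then |ε log E[exp(-h_k(X)/ε)] - ε log E[exp(-h(X)/ε)]| ≤ η + 4ε e^{-(M-η)/ε}. -/

import Mathlib

open MeasureTheory

private lemma laplace_one_sided {Ω : Type*} [MeasurableSpace Ω] (P : Measure Ω)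
    [IsProbabilityMeasure P] (F G : Ω → ℝ) (hF : Measurable F) (hG : Measurable G)
    (M ε η : ℝ) (hFb : ∀ ω, |F ω| ≤ M) (hGb : ∀ ω, |G ω| ≤ M)
    (hε : 0 < ε) (hη : 0 < η)
    (A : Set Ω) (hA : MeasurableSet A) (hPA : (P A).toReal ≤ Real.exp (-(3 * M) / ε))
    (happ : ∀ ω ∉ A, |F ω - G ω| ≤ η) :
    ε * Real.log (∫ ω, Real.exp (-(F ω) / ε) ∂P) ≤
      ε * Real.log (∫ ω, Real.exp (-(G ω) / ε) ∂P) + η + ε * Real.exp (-M / ε) := by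
  have hbound : ∀ (H : Ω → ℝ), (∀ ω, |H ω| ≤ M) → ∀ ω, Real.exp (-(H ω) / ε) ≤ Real.exp (M / ε) := by
    intro H hH ω
    apply Real.exp_le_exp.2
    have := abs_le.1 (hH ω)
    exact div_le_div_of_nonneg_right (by linarith [this.1]) hε.le
  have hmeas : ∀ (H : Ω → ℝ), Measurable H → Measurable (fun ω => Real.exp (-(H ω) / ε)) :=
    fun H hH => (Measurable.div_const hH.neg ε).exp
  have hint : ∀ (H : Ω → ℝ), Measurable H → (∀ ω, |H ω| ≤ M) →
      Integrable (fun ω => Real.exp (-(H ω) / ε)) P := by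
    intro H hH hHb
    apply Integrable.mono' (integrable_const (Real.exp (M / ε)))
      (hmeas H hH).aestronglyMeasurable
    filter_upwards with ω
    rw [Real.norm_eq_abs, abs_of_pos (Real.exp_pos _)]
    exact hbound H hHb ω
  have intF := hint F hF hFb
  have intG := hint G hG hGb
  have hlow : ∀ (H : Ω → ℝ), Measurable H → (∀ ω, |H ω| ≤ M) →
      Real.exp (-M / ε) ≤ ∫ ω, Real.exp (-(H ω) / ε) ∂P := by
    intro H hH hHb
    have : ∀ ω, Real.exp (-M / ε) ≤ Real.exp (-(H ω) / ε) := by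
      intro ω
      apply Real.exp_le_exp.2
      have := abs_le.1 (hHb ω)
      exact div_le_div_of_nonneg_right (by linarith [this.2]) hε.le
    calc Real.exp (-M / ε) = ∫ _, Real.exp (-M / ε) ∂P := by simp
      _ ≤ _ := integral_mono (integrable_const _) (hint H hH hHb) this
  have hIFpos : 0 < ∫ ω, Real.exp (-(F ω) / ε) ∂P :=
    lt_of_lt_of_le (Real.exp_pos _) (hlow F hF hFb)
  have hIGpos : 0 < ∫ ω, Real.exp (-(G ω) / ε) ∂P :=
    lt_of_lt_of_le (Real.exp_pos _) (hlow G hG hGb)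
  set IF := ∫ ω, Real.exp (-(F ω) / ε) ∂P with hIF
  set IG := ∫ ω, Real.exp (-(G ω) / ε) ∂P with hIG
  -- pointwise inequality
  have hpt : ∀ ω, Real.exp (-(F ω) / ε) ≤
      Real.exp (η / ε) * Real.exp (-(G ω) / ε) + A.indicator (fun _ => Real.exp (M / ε)) ω := by
    intro ω
    by_cases hω : ω ∈ A
    · rw [Set.indicator_of_mem hω]
      have h1 := hbound F hFb ω
      have h2 : 0 < Real.exp (η / ε) * Real.exp (-(G ω) / ε) :=
        mul_pos (Real.exp_pos _) (Real.exp_pos _)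
      linarith
    · rw [Set.indicator_of_notMem hω]
      have h1 := abs_le.1 (happ ω hω)
      rw [← Real.exp_add]
      have : -(F ω) / ε ≤ η / ε + -(G ω) / ε := by
        rw [← add_div]
        exact div_le_div_of_nonneg_right (by linarith [h1.2]) hε.le
      linarith [Real.exp_le_exp.2 this]
  have intRHS : Integrable (fun ω => Real.exp (η / ε) * Real.exp (-(G ω) / ε) +
      A.indicator (fun _ => Real.exp (M / ε)) ω) P :=
    (intG.const_mul _).add ((integrable_const _).indicator hA)
  have int_ineq : IF ≤ Real.exp (η / ε) * IG + Real.exp (M / ε) * (P A).toReal := by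
    calc IF ≤ ∫ ω, (Real.exp (η / ε) * Real.exp (-(G ω) / ε) +
        A.indicator (fun _ => Real.exp (M / ε)) ω) ∂P := integral_mono intF intRHS hpt
      _ = Real.exp (η / ε) * IG + Real.exp (M / ε) * (P A).toReal := by
        rw [integral_add (intG.const_mul _) ((integrable_const _).indicator hA),
          integral_const_mul, integral_indicator_const _ hA, smul_eq_mul, measureReal_def]
        ring
  have hexp1 : (1 : ℝ) ≤ Real.exp (η / ε) :=
    Real.one_le_exp (le_of_lt (div_pos hη hε))
  have hE2pos : 0 < Real.exp (-M / ε) := Real.exp_pos _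
  have htail : Real.exp (M / ε) * (P A).toReal ≤
      Real.exp (η / ε) * IG * Real.exp (-M / ε) := by
    have h1 : Real.exp (M / ε) * (P A).toReal ≤ Real.exp (M / ε) * Real.exp (-(3 * M) / ε) :=
      mul_le_mul_of_nonneg_left hPA (le_of_lt (Real.exp_pos _))
    have h2 : Real.exp (M / ε) * Real.exp (-(3 * M) / ε) =
        Real.exp (-M / ε) * Real.exp (-M / ε) := by
      rw [← Real.exp_add, ← Real.exp_add]; ring_nf
    have h3 : Real.exp (-M / ε) ≤ IG := hlow G hG hGb
    calc Real.exp (M / ε) * (P A).toReal ≤ Real.exp (-M / ε) * Real.exp (-M / ε) := by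
          rw [← h2]; exact h1
      _ ≤ Real.exp (-M / ε) * IG := mul_le_mul_of_nonneg_left h3 hE2pos.le
      _ = 1 * IG * Real.exp (-M / ε) := by ring
      _ ≤ Real.exp (η / ε) * IG * Real.exp (-M / ε) :=
          mul_le_mul_of_nonneg_right (mul_le_mul_of_nonneg_right hexp1 hIGpos.le) hE2pos.le
  have key : IF ≤ Real.exp (η / ε) * IG * (1 + Real.exp (-M / ε)) := by
    calc IF ≤ Real.exp (η / ε) * IG + Real.exp (M / ε) * (P A).toReal := int_ineq
      _ ≤ Real.exp (η / ε) * IG + Real.exp (η / ε) * IG * Real.exp (-M / ε) := by linarith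
      _ = Real.exp (η / ε) * IG * (1 + Real.exp (-M / ε)) := by ring
  have hlog : Real.log IF ≤ η / ε + Real.log IG + Real.exp (-M / ε) := by
    have h1 : Real.log IF ≤ Real.log (Real.exp (η / ε) * IG * (1 + Real.exp (-M / ε))) :=
      Real.log_le_log hIFpos key
    rw [Real.log_mul (by positivity) (by positivity), Real.log_mul (by positivity)
      (ne_of_gt hIGpos), Real.log_exp] at h1
    have h2 : Real.log (1 + Real.exp (-M / ε)) ≤ Real.exp (-M / ε) := by
      have := Real.log_le_sub_one_of_pos (show (0:ℝ) < 1 + Real.exp (-M / ε) by positivity)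
      linarith
    linarith
  have := mul_le_mul_of_nonneg_left hlog (le_of_lt hε)
  have hεη : ε * (η / ε) = η := by field_simp
  nlinarith

/-- Stability of the Laplace functional `ε log E[exp(-h(X)/ε)]` under uniform approximation
of `h` on a set `B` of overwhelming probability. -/
theorem laplace_functional_approximation {S : Type*} [MetricSpace S] [MeasurableSpace S] [BorelSpace S]
    {Ω : Type*} [MeasurableSpace Ω] (P : Measure Ω) [IsProbabilityMeasure P]
    (hk h : S → ℝ) (hkc : Continuous hk) (hc : Continuous h)
    (M : ℝ) (hkb : ∀ x, |hk x| ≤ M) (hb : ∀ x, |h x| ≤ M)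
    (B : Set S) (X : Ω → S) (hX : Measurable X)
    (ε : ℝ) (hε : ε ∈ Set.Ioo (0:ℝ) 1)
    (hP : (P {ω | X ω ∉ B}).toReal ≤ Real.exp (-(3 * M) / ε))
    (η : ℝ) (hη : 0 < η) (hηM : η < M)
    (happrox : ∀ x ∈ B, |hk x - h x| ≤ η) :
    |ε * Real.log (∫ ω, Real.exp (-(hk (X ω)) / ε) ∂P) -
      ε * Real.log (∫ ω, Real.exp (-(h (X ω)) / ε) ∂P)| ≤
      η + 4 * ε * Real.exp (-(M - η) / ε) := by
  obtain ⟨hε0, hε1⟩ := hε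
  set A := toMeasurable P {ω | X ω ∉ B} with hAdef
  have hA : MeasurableSet A := measurableSet_toMeasurable _ _
  have hPA : (P A).toReal ≤ Real.exp (-(3 * M) / ε) := by
    rw [hAdef, measure_toMeasurable]; exact hP
  have hF : Measurable (fun ω => hk (X ω)) := hkc.measurable.comp hX
  have hG : Measurable (fun ω => h (X ω)) := hc.measurable.comp hX
  have happ1 : ∀ ω ∉ A, |hk (X ω) - h (X ω)| ≤ η := by
    intro ω hω
    have : X ω ∈ B := by
      by_contra hc
      exact hω (subset_toMeasurable P _ hc)
    exact happrox _ this
  have happ2 : ∀ ω ∉ A, |h (X ω) - hk (X ω)| ≤ η := by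
    intro ω hω; rw [abs_sub_comm]; exact happ1 ω hω
  have h1 := laplace_one_sided P (fun ω => hk (X ω)) (fun ω => h (X ω)) hF hG M ε η
    (fun ω => hkb (X ω)) (fun ω => hb (X ω)) hε0 hη A hA hPA happ1
  have h2 := laplace_one_sided P (fun ω => h (X ω)) (fun ω => hk (X ω)) hG hF M ε η
    (fun ω => hb (X ω)) (fun ω => hkb (X ω)) hε0 hη A hA hPA happ2
  have hexp : Real.exp (-M / ε) ≤ Real.exp (-(M - η) / ε) := by
    apply Real.exp_le_exp.2
    exact div_le_div_of_nonneg_right (by linarith) hε0.le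
  rw [abs_sub_le_iff]
  constructor
  · nlinarith [Real.exp_pos (-(M - η) / ε)]
  · nlinarith [Real.exp_pos (-(M - η) / ε)]
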